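/- Let f : ℝ² → ℂ be bounded and continuous with sup_{y∈ℝ} |f(y,β)| → 0 as |β| → ∞. For ν ∈ {−1,0,1} and t > 0 set I_ν(t) := √(π/T(t)) · ∫∫_{ℝ²} f(y, ν e^{-x}) · exp(−T(t)·x²) · exp(−(S(t)·x − y)²/(4·T(t))) dx dy, where T(t) := (1/2)tanh(2t) and S(t) := 2 sinh²(t)/cosh(2t). Then lim_{t→0⁺} √t · I_ν(t) = π^{3/2}·f(0,0) for ν ∈ {−1,+1}, and lim_{t→0⁺} √t · I₀(t) = 2π^{3/2}·f(0,0). -/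

import Mathlib

open MeasureTheory Filter

/-- `T(t) := (1/2)·tanh(2t)`. -/
noncomputable def Tt (t : ℝ) : ℝ := (1 / 2) * Real.tanh (2 * t)

/-- `S(t) := 2·sinh²(t)/cosh(2t)`. -/
noncomputable def St (t : ℝ) : ℝ := 2 * Real.sinh t ^ 2 / Real.cosh (2 * t)

/-- `I_ν(t) := √(π/T(t)) ∫∫ f(y, ν e^{-x}) e^{−T(t)x²} e^{−(S(t)x−y)²/(4T(t))} dx dy`. -/
noncomputable def Inu (f : ℝ × ℝ → ℂ) (ν : ℝ) (t : ℝ) : ℂ :=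
  ((Real.sqrt (Real.pi / Tt t) : ℝ) : ℂ) *
    ∫ p : ℝ × ℝ, f (p.2, ν * Real.exp (-p.1)) *
      ((Real.exp (-(Tt t) * p.1 ^ 2) : ℝ) : ℂ) *
      ((Real.exp (-((St t) * p.1 - p.2) ^ 2 / (4 * Tt t)) : ℝ) : ℂ)



private lemma lim_sinh : Tendsto (fun s : ℝ => Real.sinh s / s) (nhdsWithin 0 {(0:ℝ)}ᶜ) (nhds 1) := by
  have h := (Real.hasDerivAt_sinh 0)
  rw [hasDerivAt_iff_tendsto_slope, Real.cosh_zero] at h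
  refine h.congr fun s => ?_
  simp [slope_def_field, Real.sinh_zero]

private lemma Tt_pos {t : ℝ} (ht : 0 < t) : 0 < Tt t := by
  unfold Tt
  rw [Real.tanh_eq_sinh_div_cosh]
  have h1 : 0 < Real.sinh (2*t) := Real.sinh_pos_iff.mpr (by linarith)
  have h2 := Real.cosh_pos (2*t)
  positivity

private lemma lim_sinh' : Tendsto (fun s : ℝ => Real.sinh s / s) (nhdsWithin 0 (Set.Ioi 0)) (nhds 1) :=
  lim_sinh.mono_left (nhdsWithin_mono 0 (fun x hx => ne_of_gt hx))

private lemma cosh_lim : Tendsto (fun t : ℝ => Real.cosh (2*t)) (nhdsWithin 0 (Set.Ioi 0)) (nhds 1) := by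
  have : Continuous fun t : ℝ => Real.cosh (2*t) := Real.continuous_cosh.comp (continuous_const.mul continuous_id)
  simpa using (this.tendsto 0).mono_left nhdsWithin_le_nhds

private lemma lim_ratio : Tendsto (fun t : ℝ => Tt t / t) (nhdsWithin 0 (Set.Ioi 0)) (nhds 1) := by
  have h2 : Tendsto (fun t : ℝ => 2*t) (nhdsWithin 0 (Set.Ioi 0)) (nhdsWithin 0 {(0:ℝ)}ᶜ) := by
    rw [tendsto_nhdsWithin_iff]
    constructor
    · simpa using ((continuous_mul_left (2:ℝ)).tendsto 0).mono_left
        (nhdsWithin_le_nhds (s := Set.Ioi (0:ℝ)))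
    · filter_upwards [self_mem_nhdsWithin] with t ht
      exact ne_of_gt (by simpa using ht : (0:ℝ) < 2*t)
  have hs2 : Tendsto (fun t : ℝ => Real.sinh (2*t) / (2*t)) (nhdsWithin 0 (Set.Ioi 0)) (nhds 1) :=
    lim_sinh.comp h2
  have hd := hs2.div cosh_lim one_ne_zero
  rw [div_one] at hd
  refine hd.congr' ?_
  filter_upwards [self_mem_nhdsWithin] with t ht
  have ht' : (t:ℝ) ≠ 0 := ne_of_gt ht
  have hc := (Real.cosh_pos (2*t)).ne'
  rw [Pi.div_apply]
  unfold Tt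
  rw [Real.tanh_eq_sinh_div_cosh]
  field_simp

private lemma lim_sqrt_ratio : Tendsto (fun t : ℝ => Real.sqrt t / Real.sqrt (Tt t)) (nhdsWithin 0 (Set.Ioi 0)) (nhds 1) := by
  have h1 : Tendsto (fun t : ℝ => t / Tt t) (nhdsWithin 0 (Set.Ioi 0)) (nhds 1) := by
    have h := lim_ratio.inv₀ one_ne_zero
    rw [inv_one] at h
    exact h.congr fun t => inv_div _ _
  have h2 := (Real.continuous_sqrt.tendsto 1).comp h1
  rw [Real.sqrt_one] at h2
  refine h2.congr' ?_
  filter_upwards [self_mem_nhdsWithin] with t ht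
  exact (Real.sqrt_div (le_of_lt ht) _)

private lemma lim_S : Tendsto (fun t : ℝ => St t / Real.sqrt (Tt t)) (nhdsWithin 0 (Set.Ioi 0)) (nhds 0) := by
  have hsh0 : Tendsto (fun t : ℝ => Real.sinh t) (nhdsWithin 0 (Set.Ioi 0)) (nhds 0) := by
    simpa using (Real.continuous_sinh.tendsto 0).mono_left nhdsWithin_le_nhds
  have hst : Tendsto (fun t : ℝ => St t / t) (nhdsWithin 0 (Set.Ioi 0)) (nhds 0) := by
    have h := ((hsh0.const_mul 2).mul lim_sinh').div cosh_lim one_ne_zero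
    norm_num at h
    refine h.congr' ?_
    filter_upwards [self_mem_nhdsWithin] with t ht
    have ht' : (t:ℝ) ≠ 0 := ne_of_gt ht
    have hc := (Real.cosh_pos (2*t)).ne'
    rw [Pi.div_apply]
    unfold St
    field_simp
  have hsq0 : Tendsto (fun t : ℝ => Real.sqrt t) (nhdsWithin 0 (Set.Ioi 0)) (nhds 0) := by
    simpa using (Real.continuous_sqrt.tendsto 0).mono_left nhdsWithin_le_nhds
  have h := (hst.mul lim_sqrt_ratio).mul hsq0
  norm_num at h
  refine h.congr' ?_
  filter_upwards [self_mem_nhdsWithin] with t ht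
  have ht' : (t:ℝ) ≠ 0 := ne_of_gt ht
  have hT := Tt_pos ht
  have hr : (0:ℝ) < Real.sqrt (Tt t) := Real.sqrt_pos.mpr hT
  have hself : Real.sqrt t * Real.sqrt t = t := Real.mul_self_sqrt (le_of_lt ht)
  field_simp
  rw [Real.sq_sqrt (le_of_lt ht)]

private lemma lim_r0 : Tendsto (fun t : ℝ => Real.sqrt (Tt t)) (nhdsWithin 0 (Set.Ioi 0)) (nhdsWithin 0 (Set.Ioi 0)) := by
  rw [tendsto_nhdsWithin_iff]
  constructor
  · have hcont : Continuous fun t : ℝ => Real.sqrt (Tt t) := by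
      apply Real.continuous_sqrt.comp
      unfold Tt
      have htanh : Continuous Real.tanh := by
        have : Real.tanh = fun x => Real.sinh x / Real.cosh x :=
          funext fun x => Real.tanh_eq_sinh_div_cosh x
        rw [this]
        exact Real.continuous_sinh.div Real.continuous_cosh fun x => (Real.cosh_pos x).ne'
      exact continuous_const.mul (htanh.comp (continuous_const.mul continuous_id))
    simpa [Tt] using (hcont.tendsto 0).mono_left nhdsWithin_le_nhds
  · filter_upwards [self_mem_nhdsWithin] with t ht
    exact Real.sqrt_pos.mpr (Tt_pos ht)


private lemma sub1 (g : ℝ → ℂ) {a : ℝ} (c : ℝ) (ha : 0 < a) :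
    ∫ y : ℝ, g y = a • ∫ v : ℝ, g (a * v + c) := by
  have h1 : ∫ y : ℝ, g y = ∫ y : ℝ, g (y + c) := (integral_add_right_eq_self g c).symm
  have h2 : (∫ x : ℝ, g (a * x + c)) = |a⁻¹| • ∫ y : ℝ, g (y + c) :=
    MeasureTheory.Measure.integral_comp_mul_left (fun y => g (y + c)) a
  rw [h1, h2, smul_smul, abs_of_pos (inv_pos.mpr ha), mul_inv_cancel₀ (ne_of_gt ha), one_smul]

private lemma sub2 (g : ℝ → ℂ) {a : ℝ} (ha : 0 < a) :
    ∫ y : ℝ, g y = a • ∫ v : ℝ, g (a * v) := by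
  simpa using sub1 g 0 ha

private lemma Tt_pos' {t : ℝ} (ht : 0 < t) : 0 < Tt t := by
  unfold Tt
  rw [Real.tanh_eq_sinh_div_cosh]
  have h1 : 0 < Real.sinh (2*t) := Real.sinh_pos_iff.mpr (by linarith)
  have h2 := Real.cosh_pos (2*t)
  positivity

private lemma key_step (f : ℝ × ℝ → ℂ) (hf : Continuous f) (C : ℝ)
    (hC : ∀ p : ℝ × ℝ, ‖f p‖ ≤ C) (ν t : ℝ) (ht : 0 < t) :
    (∫ p : ℝ × ℝ, f (p.2, ν * Real.exp (-p.1)) *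
      ((Real.exp (-(Tt t) * p.1 ^ 2) : ℝ) : ℂ) *
      ((Real.exp (-((St t) * p.1 - p.2) ^ 2 / (4 * Tt t)) : ℝ) : ℂ))
    = 2 * ∫ p : ℝ × ℝ,
        f (2 * Real.sqrt (Tt t) * p.2 + (St t / Real.sqrt (Tt t)) * p.1,
           ν * Real.exp (-(p.1 / Real.sqrt (Tt t)))) *
        ((Real.exp (-p.1 ^ 2) : ℝ) : ℂ) * ((Real.exp (-p.2 ^ 2) : ℝ) : ℂ) := by
  have hT : 0 < Tt t := Tt_pos' ht
  set T := Tt t with hTdef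
  set S := St t with hSdef
  set r := Real.sqrt T with hrdef
  have hr : 0 < r := Real.sqrt_pos.mpr hT
  have hr2 : r ^ 2 = T := Real.sq_sqrt hT.le
  set F : ℝ × ℝ → ℂ := fun p => f (p.2, ν * Real.exp (-p.1)) *
      ((Real.exp (-T * p.1 ^ 2) : ℝ) : ℂ) *
      ((Real.exp (-(S * p.1 - p.2) ^ 2 / (4 * T)) : ℝ) : ℂ) with hFdef
  set G : ℝ × ℝ → ℂ := fun p => f (2 * r * p.2 + (S / r) * p.1, ν * Real.exp (-(p.1 / r))) *
      ((Real.exp (-p.1 ^ 2) : ℝ) : ℂ) * ((Real.exp (-p.2 ^ 2) : ℝ) : ℂ) with hGdef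
  have hFc : Continuous F := by
    apply Continuous.mul
    apply Continuous.mul
    · exact hf.comp (continuous_snd.prodMk
        (continuous_const.mul (Real.continuous_exp.comp continuous_fst.neg)))
    · exact Complex.continuous_ofReal.comp (Real.continuous_exp.comp (by fun_prop))
    · exact Complex.continuous_ofReal.comp (Real.continuous_exp.comp (by fun_prop))
  have hGc : Continuous G := by
    apply Continuous.mul
    apply Continuous.mul
    · exact hf.comp ((by fun_prop : Continuous fun p : ℝ × ℝ =>
        2 * r * p.2 + (S / r) * p.1).prodMk
        (continuous_const.mul (Real.continuous_exp.comp (by fun_prop))))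
    · exact Complex.continuous_ofReal.comp (Real.continuous_exp.comp (by fun_prop))
    · exact Complex.continuous_ofReal.comp (Real.continuous_exp.comp (by fun_prop))
  -- integrability of G
  have hgauss1 : Integrable (fun x : ℝ => Real.exp (-x ^ 2)) := by
    simpa using integrable_exp_neg_mul_sq (one_pos)
  have hgauss : Integrable (fun p : ℝ × ℝ => Real.exp (-p.1 ^ 2) * Real.exp (-p.2 ^ 2))
      ((volume : Measure ℝ).prod volume) := hgauss1.mul_prod hgauss1
  have hGi : Integrable G ((volume : Measure ℝ).prod volume) := by
    apply Integrable.mono' (hgauss.const_mul C)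
    · rw [← Measure.volume_eq_prod]
      exact hGc.aestronglyMeasurable
    · refine Filter.Eventually.of_forall fun p => ?_
      have hb := hC (2 * r * p.2 + (S / r) * p.1, ν * Real.exp (-(p.1 / r)))
      simp only [hGdef, norm_mul, Complex.norm_real, Real.norm_eq_abs,
        abs_of_pos (Real.exp_pos _), ← mul_assoc]
      have h1 := (Real.exp_pos (-p.1 ^ 2)).le
      have h2 := (Real.exp_pos (-p.2 ^ 2)).le
      gcongr
  -- integrability of F
  have hC0 : 0 ≤ C := le_trans (norm_nonneg _) (hC (0, 0))
  have hyg : Integrable (fun y : ℝ => Real.exp (-((4*T)⁻¹) * y ^ 2)) :=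
    integrable_exp_neg_mul_sq (by positivity)
  have hptbd : ∀ x y : ℝ, ‖F (x, y)‖ ≤
      C * Real.exp (-T * x ^ 2) * Real.exp (-((4*T)⁻¹) * (y - S*x) ^ 2) := by
    intro x y
    have hb := hC (y, ν * Real.exp (-x))
    have heq : -(S*x - y) ^ 2 / (4*T) = -((4*T)⁻¹) * (y - S*x) ^ 2 := by ring
    simp only [hFdef, norm_mul, Complex.norm_real, Real.norm_eq_abs, Real.abs_exp, heq]
    gcongr
  have hyint : ∀ x : ℝ, Integrable (fun y => F (x, y)) := by
    intro x
    have hg : Integrable (fun y : ℝ => Real.exp (-((4*T)⁻¹) * (y - S*x) ^ 2)) :=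
      hyg.comp_sub_right (S*x)
    apply Integrable.mono' (hg.const_mul (C * Real.exp (-T * x ^ 2)))
    · exact (hFc.comp (Continuous.prodMk_right x)).aestronglyMeasurable
    · exact Filter.Eventually.of_forall fun y => by
        simpa [mul_assoc] using hptbd x y
  have hFm : AEStronglyMeasurable F ((volume : Measure ℝ).prod volume) := by
    rw [← Measure.volume_eq_prod]; exact hFc.aestronglyMeasurable
  have hnormint : Integrable (fun x : ℝ => ∫ y : ℝ, ‖F (x, y)‖) := by
    apply Integrable.mono'
      ((integrable_exp_neg_mul_sq hT).const_mul (C * Real.sqrt (Real.pi / (4*T)⁻¹)))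
    · exact hFm.norm.integral_prod_right'
    · refine Filter.Eventually.of_forall fun x => ?_
      rw [Real.norm_eq_abs, abs_of_nonneg (integral_nonneg fun y => norm_nonneg _)]
      have hg : Integrable (fun y : ℝ => Real.exp (-((4*T)⁻¹) * (y - S*x) ^ 2)) :=
        hyg.comp_sub_right (S*x)
      have hle : (∫ y : ℝ, ‖F (x, y)‖) ≤
          ∫ y : ℝ, (C * Real.exp (-T * x ^ 2)) * Real.exp (-((4*T)⁻¹) * (y - S*x) ^ 2) := by
        refine integral_mono ((hyint x).norm) (hg.const_mul _) fun y => ?_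
        simpa [mul_assoc] using hptbd x y
      have htrans : (∫ y : ℝ, Real.exp (-((4*T)⁻¹) * (y - S*x) ^ 2))
          = ∫ y : ℝ, Real.exp (-((4*T)⁻¹) * y ^ 2) :=
        integral_sub_right_eq_self (fun y : ℝ => Real.exp (-((4*T)⁻¹) * y ^ 2)) (S*x)
      have hval : (∫ y : ℝ, (C * Real.exp (-T * x ^ 2)) * Real.exp (-((4*T)⁻¹) * (y - S*x) ^ 2))
          = C * Real.exp (-T * x ^ 2) * Real.sqrt (Real.pi / (4*T)⁻¹) := by
        rw [integral_const_mul, htrans, integral_gaussian]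
      rw [hval] at hle
      calc (∫ y : ℝ, ‖F (x, y)‖) ≤ C * Real.exp (-T * x ^ 2) * Real.sqrt (Real.pi / (4*T)⁻¹) := hle
        _ = C * Real.sqrt (Real.pi / (4*T)⁻¹) * Real.exp (-T * x ^ 2) := by ring
  have hFi : Integrable F ((volume : Measure ℝ).prod volume) :=
    (integrable_prod_iff hFm).2 ⟨Filter.Eventually.of_forall hyint, hnormint⟩
  -- the change of variables
  show (∫ p : ℝ × ℝ, F p) = 2 * ∫ p : ℝ × ℝ, G p
  rw [Measure.volume_eq_prod]
  calc (∫ p : ℝ × ℝ, F p ∂((volume : Measure ℝ).prod volume))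
      = ∫ x : ℝ, ∫ y : ℝ, F (x, y) := integral_prod F hFi
    _ = ∫ x : ℝ, (2*r : ℝ) • ∫ v : ℝ, F (x, 2*r*v + S*x) := by
        refine integral_congr_ae (Filter.Eventually.of_forall fun x => ?_)
        exact sub1 (fun y => F (x, y)) (S*x) (by positivity)
    _ = (2*r : ℝ) • ∫ x : ℝ, ∫ v : ℝ, F (x, 2*r*v + S*x) := integral_smul _ _
    _ = (2*r : ℝ) • ((r⁻¹ : ℝ) • ∫ u : ℝ, ∫ v : ℝ, F (r⁻¹*u, 2*r*v + S*(r⁻¹*u))) :=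
        congrArg (fun z => (2*r : ℝ) • z)
          (sub2 (fun x => ∫ v : ℝ, F (x, 2*r*v + S*x)) (inv_pos.mpr hr))
    _ = (2*r : ℝ) • ((r⁻¹ : ℝ) • ∫ u : ℝ, ∫ v : ℝ, G (u, v)) := by
        congr 1
        congr 1
        refine integral_congr_ae (Filter.Eventually.of_forall fun u => ?_)
        refine integral_congr_ae (Filter.Eventually.of_forall fun v => ?_)
        show F (r⁻¹*u, 2*r*v + S*(r⁻¹*u)) = G (u, v)
        have ha : 2*r*v + S*(r⁻¹*u) = 2*r*v + (S/r)*u := by ring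
        have hb : -(r⁻¹*u) = -(u/r) := by ring
        have hcx : -T*(r⁻¹*u) ^ 2 = -u ^ 2 := by
          rw [← hr2]; field_simp
        have hd : -(S*(r⁻¹*u) - (2*r*v + S*(r⁻¹*u))) ^ 2 / (4*T) = -v ^ 2 := by
          rw [← hr2]; field_simp; ring
        simp only [hFdef, hGdef]
        rw [hd, hcx, ha, hb]
    _ = (2*r : ℝ) • ((r⁻¹ : ℝ) • ∫ p : ℝ × ℝ, G p ∂((volume : Measure ℝ).prod volume)) := by
        rw [integral_prod G hGi]
    _ = 2 * ∫ p : ℝ × ℝ, G p ∂((volume : Measure ℝ).prod volume) := by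
        rw [smul_smul, show (2*r) * r⁻¹ = (2:ℝ) by field_simp, Complex.real_smul]
        norm_num

/-- For `f` bounded continuous with `sup_y |f(y,β)| → 0` as `|β| → ∞`:
`lim_{t→0⁺} √t·I_ν(t) = π^{3/2} f(0,0)` for `ν = ±1`, and `= 2π^{3/2} f(0,0)` for `ν = 0`. -/
theorem stmt_18 (f : ℝ × ℝ → ℂ) (hf : Continuous f)
    (hbd : ∃ C : ℝ, ∀ p : ℝ × ℝ, ‖f p‖ ≤ C)
    (hdecay : ∀ ε > (0 : ℝ), ∃ M : ℝ, ∀ y β : ℝ, M ≤ |β| → ‖f (y, β)‖ ≤ ε)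
    (ν : ℝ) :
    ((ν = -1 ∨ ν = 1) →
      Tendsto (fun t : ℝ => ((Real.sqrt t : ℝ) : ℂ) * Inu f ν t)
        (nhdsWithin 0 (Set.Ioi 0))
        (nhds (((Real.pi ^ ((3 : ℝ) / 2) : ℝ) : ℂ) * f (0, 0)))) ∧
    (ν = 0 →
      Tendsto (fun t : ℝ => ((Real.sqrt t : ℝ) : ℂ) * Inu f ν t)
        (nhdsWithin 0 (Set.Ioi 0))
        (nhds (2 * ((Real.pi ^ ((3 : ℝ) / 2) : ℝ) : ℂ) * f (0, 0)))) := by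
  obtain ⟨C, hC⟩ := hbd
  have hC0 : 0 ≤ C := le_trans (norm_nonneg _) (hC (0, 0))
  have hgauss1 : Integrable (fun x : ℝ => Real.exp (-x ^ 2)) := by
    simpa using integrable_exp_neg_mul_sq (one_pos)
  have hbint : Integrable (fun p : ℝ × ℝ => C * (Real.exp (-p.1 ^ 2) * Real.exp (-p.2 ^ 2))) := by
    rw [show (volume : Measure (ℝ × ℝ)) = (volume : Measure ℝ).prod volume from
      Measure.volume_eq_prod ℝ ℝ]
    exact (hgauss1.mul_prod hgauss1).const_mul C
  have hmeasG : ∀ ν' t : ℝ, AEStronglyMeasurable (fun p : ℝ × ℝ =>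
      f (2 * Real.sqrt (Tt t) * p.2 + (St t / Real.sqrt (Tt t)) * p.1,
        ν' * Real.exp (-(p.1 / Real.sqrt (Tt t)))) *
      ((Real.exp (-p.1 ^ 2) : ℝ) : ℂ) * ((Real.exp (-p.2 ^ 2) : ℝ) : ℂ)) volume := by
    intro ν' t
    apply Continuous.aestronglyMeasurable
    apply Continuous.mul
    apply Continuous.mul
    · exact hf.comp ((by fun_prop : Continuous fun p : ℝ × ℝ =>
        2 * Real.sqrt (Tt t) * p.2 + (St t / Real.sqrt (Tt t)) * p.1).prodMk
        (continuous_const.mul (Real.continuous_exp.comp (by fun_prop))))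
    · exact Complex.continuous_ofReal.comp (Real.continuous_exp.comp (by fun_prop))
    · exact Complex.continuous_ofReal.comp (Real.continuous_exp.comp (by fun_prop))
  have hnormG : ∀ ν' t : ℝ, ∀ p : ℝ × ℝ,
      ‖f (2 * Real.sqrt (Tt t) * p.2 + (St t / Real.sqrt (Tt t)) * p.1,
          ν' * Real.exp (-(p.1 / Real.sqrt (Tt t)))) *
        ((Real.exp (-p.1 ^ 2) : ℝ) : ℂ) * ((Real.exp (-p.2 ^ 2) : ℝ) : ℂ)‖
      ≤ C * (Real.exp (-p.1 ^ 2) * Real.exp (-p.2 ^ 2)) := by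
    intro ν' t p
    have hb := hC (2 * Real.sqrt (Tt t) * p.2 + (St t / Real.sqrt (Tt t)) * p.1,
      ν' * Real.exp (-(p.1 / Real.sqrt (Tt t))))
    have h1 := (Real.exp_pos (-p.1 ^ 2)).le
    have h2 := (Real.exp_pos (-p.2 ^ 2)).le
    simp only [norm_mul, Complex.norm_real, Real.norm_eq_abs, Real.abs_exp, ← mul_assoc]
    gcongr
  have hy0 : ∀ u v : ℝ, Tendsto (fun t : ℝ =>
      2 * Real.sqrt (Tt t) * v + (St t / Real.sqrt (Tt t)) * u)
      (nhdsWithin 0 (Set.Ioi 0)) (nhds 0) := by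
    intro u v
    have h1 := ((lim_r0.mono_right nhdsWithin_le_nhds).const_mul (2:ℝ)).mul_const v
    have h2 := lim_S.mul_const u
    have h := h1.add h2
    norm_num at h
    exact h
  have hsc : Tendsto (fun t : ℝ => Real.sqrt t * Real.sqrt (Real.pi / Tt t) * 2)
      (nhdsWithin 0 (Set.Ioi 0)) (nhds (2 * Real.sqrt Real.pi)) := by
    have h := (lim_sqrt_ratio.mul_const (Real.sqrt Real.pi)).mul_const (2:ℝ)
    have he : (1:ℝ) * Real.sqrt Real.pi * 2 = 2 * Real.sqrt Real.pi := by ring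
    rw [he] at h
    refine h.congr fun t => ?_
    rw [Real.sqrt_div Real.pi_pos.le]
    ring
  have hkey : ∀ᶠ t in nhdsWithin (0:ℝ) (Set.Ioi 0),
      ((Real.sqrt t : ℝ) : ℂ) * Inu f ν t
      = ((Real.sqrt t * Real.sqrt (Real.pi / Tt t) * 2 : ℝ) : ℂ) *
        ∫ p : ℝ × ℝ, f (2 * Real.sqrt (Tt t) * p.2 + (St t / Real.sqrt (Tt t)) * p.1,
            ν * Real.exp (-(p.1 / Real.sqrt (Tt t)))) *
          ((Real.exp (-p.1 ^ 2) : ℝ) : ℂ) * ((Real.exp (-p.2 ^ 2) : ℝ) : ℂ) := by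
    filter_upwards [self_mem_nhdsWithin] with t ht
    unfold Inu
    rw [key_step f hf C hC ν t ht]
    push_cast
    ring
  have hπ32 : Real.pi ^ ((3 : ℝ) / 2) = Real.pi * Real.sqrt Real.pi := by
    rw [show (3:ℝ)/2 = 1 + 1/2 by norm_num, Real.rpow_add Real.pi_pos, Real.rpow_one,
      ← Real.sqrt_eq_rpow]
  have hss : Real.sqrt Real.pi * Real.sqrt Real.pi = Real.pi :=
    Real.mul_self_sqrt Real.pi_pos.le
  constructor
  · -- ν = ±1
    intro hν
    have hν1 : |ν| = 1 := by rcases hν with h | h <;> simp [h]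
    -- a.e. pointwise limit
    have hnull : (volume : Measure (ℝ × ℝ)) {p : ℝ × ℝ | p.1 = 0} = 0 := by
      rw [show (volume : Measure (ℝ × ℝ)) = (volume : Measure ℝ).prod volume from
        Measure.volume_eq_prod ℝ ℝ]
      have hset : {p : ℝ × ℝ | p.1 = 0} = ({0} : Set ℝ) ×ˢ (Set.univ : Set ℝ) := by
        ext ⟨a, b⟩; simp [eq_comm]
      rw [hset, Measure.prod_prod]
      simp
    have hlim : ∀ᵐ p : ℝ × ℝ, Tendsto (fun t : ℝ =>
        f (2 * Real.sqrt (Tt t) * p.2 + (St t / Real.sqrt (Tt t)) * p.1,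
          ν * Real.exp (-(p.1 / Real.sqrt (Tt t)))) *
        ((Real.exp (-p.1 ^ 2) : ℝ) : ℂ) * ((Real.exp (-p.2 ^ 2) : ℝ) : ℂ))
        (nhdsWithin 0 (Set.Ioi 0))
        (nhds ((Set.Ioi (0:ℝ)).indicator
          (fun u => f (0,0) * ((Real.exp (-u ^ 2) : ℝ) : ℂ)) p.1 *
          ((Real.exp (-p.2 ^ 2) : ℝ) : ℂ))) := by
      filter_upwards [compl_mem_ae_iff.mpr hnull] with p hp
      have hp' : p.1 ≠ 0 := hp
      rcases hp'.lt_or_gt with hneg | hpos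
      · -- p.1 < 0 : limit is 0
        have hz : (Set.Ioi (0:ℝ)).indicator
            (fun u => f (0,0) * ((Real.exp (-u ^ 2) : ℝ) : ℂ)) p.1 *
            ((Real.exp (-p.2 ^ 2) : ℝ) : ℂ) = 0 := by
          rw [Set.indicator_of_notMem (by simpa using hneg.not_gt)]
          simp
        rw [hz]
        have habs : Tendsto (fun t : ℝ => |ν * Real.exp (-(p.1 / Real.sqrt (Tt t)))|)
            (nhdsWithin 0 (Set.Ioi 0)) atTop := by
          have hdiv : Tendsto (fun t : ℝ => (-p.1) * (Real.sqrt (Tt t))⁻¹)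
              (nhdsWithin 0 (Set.Ioi 0)) atTop :=
            (lim_r0.inv_tendsto_nhdsGT_zero).const_mul_atTop (by linarith)
          have hexp : Tendsto (fun t : ℝ => Real.exp (-(p.1 / Real.sqrt (Tt t))))
              (nhdsWithin 0 (Set.Ioi 0)) atTop := by
            apply Real.tendsto_exp_atTop.comp
            refine hdiv.congr fun t => ?_
            rw [div_eq_mul_inv]; ring
          refine hexp.congr fun t => ?_
          rw [abs_mul, hν1, one_mul, Real.abs_exp]
        rw [NormedAddCommGroup.tendsto_nhds_zero]
        intro ε hε
        obtain ⟨M, hM⟩ := hdecay (ε/2) (by linarith)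
        filter_upwards [habs.eventually_ge_atTop M] with t hMt
        have hfb := hM (2 * Real.sqrt (Tt t) * p.2 + (St t / Real.sqrt (Tt t)) * p.1)
          (ν * Real.exp (-(p.1 / Real.sqrt (Tt t)))) hMt
        have h1 : Real.exp (-p.1 ^ 2) ≤ 1 :=
          Real.exp_le_one_iff.mpr (neg_nonpos.mpr (sq_nonneg _))
        have h2 : Real.exp (-p.2 ^ 2) ≤ 1 :=
          Real.exp_le_one_iff.mpr (neg_nonpos.mpr (sq_nonneg _))
        have hnn : (0:ℝ) ≤ ε/2 := by linarith
        calc ‖f (2 * Real.sqrt (Tt t) * p.2 + (St t / Real.sqrt (Tt t)) * p.1,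
              ν * Real.exp (-(p.1 / Real.sqrt (Tt t)))) *
            ((Real.exp (-p.1 ^ 2) : ℝ) : ℂ) * ((Real.exp (-p.2 ^ 2) : ℝ) : ℂ)‖
            = ‖f (2 * Real.sqrt (Tt t) * p.2 + (St t / Real.sqrt (Tt t)) * p.1,
              ν * Real.exp (-(p.1 / Real.sqrt (Tt t))))‖ *
              Real.exp (-p.1 ^ 2) * Real.exp (-p.2 ^ 2) := by
              simp only [norm_mul, Complex.norm_real, Real.norm_eq_abs, Real.abs_exp]
          _ ≤ (ε/2) * 1 * 1 := by gcongr
          _ < ε := by linarith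
      · -- p.1 > 0
        have hmem : (Set.Ioi (0:ℝ)).indicator
            (fun u => f (0,0) * ((Real.exp (-u ^ 2) : ℝ) : ℂ)) p.1 *
            ((Real.exp (-p.2 ^ 2) : ℝ) : ℂ)
            = f (0,0) * ((Real.exp (-p.1 ^ 2) : ℝ) : ℂ) * ((Real.exp (-p.2 ^ 2) : ℝ) : ℂ) := by
          rw [Set.indicator_of_mem (by simpa using hpos)]
        rw [hmem]
        have hβ : Tendsto (fun t : ℝ => ν * Real.exp (-(p.1 / Real.sqrt (Tt t))))
            (nhdsWithin 0 (Set.Ioi 0)) (nhds 0) := by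
          have hdiv : Tendsto (fun t : ℝ => p.1 * (Real.sqrt (Tt t))⁻¹)
              (nhdsWithin 0 (Set.Ioi 0)) atTop :=
            (lim_r0.inv_tendsto_nhdsGT_zero).const_mul_atTop hpos
          have hexp : Tendsto (fun t : ℝ => Real.exp (-(p.1 / Real.sqrt (Tt t))))
              (nhdsWithin 0 (Set.Ioi 0)) (nhds 0) := by
            apply Real.tendsto_exp_atBot.comp
            have h := tendsto_neg_atTop_atBot.comp hdiv
            refine h.congr fun t => ?_
            simp [Function.comp, div_eq_mul_inv]
          simpa using hexp.const_mul ν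
        have harg : Tendsto (fun t : ℝ =>
            ((2 * Real.sqrt (Tt t) * p.2 + (St t / Real.sqrt (Tt t)) * p.1 : ℝ),
              (ν * Real.exp (-(p.1 / Real.sqrt (Tt t))) : ℝ)))
            (nhdsWithin 0 (Set.Ioi 0)) (nhds ((0:ℝ), (0:ℝ))) :=
          (hy0 p.1 p.2).prodMk_nhds hβ
        exact (((hf.tendsto ((0:ℝ),(0:ℝ))).comp harg).mul tendsto_const_nhds).mul
          tendsto_const_nhds
    have hJ : Tendsto (fun t : ℝ =>
        ∫ p : ℝ × ℝ, f (2 * Real.sqrt (Tt t) * p.2 + (St t / Real.sqrt (Tt t)) * p.1,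
            ν * Real.exp (-(p.1 / Real.sqrt (Tt t)))) *
          ((Real.exp (-p.1 ^ 2) : ℝ) : ℂ) * ((Real.exp (-p.2 ^ 2) : ℝ) : ℂ))
        (nhdsWithin 0 (Set.Ioi 0))
        (nhds (∫ p : ℝ × ℝ, (Set.Ioi (0:ℝ)).indicator
          (fun u => f (0,0) * ((Real.exp (-u ^ 2) : ℝ) : ℂ)) p.1 *
          ((Real.exp (-p.2 ^ 2) : ℝ) : ℂ))) :=
      tendsto_integral_filter_of_dominated_convergence
        (fun p : ℝ × ℝ => C * (Real.exp (-p.1 ^ 2) * Real.exp (-p.2 ^ 2)))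
        (Eventually.of_forall (hmeasG ν))
        (Eventually.of_forall fun t => Eventually.of_forall (hnormG ν t))
        hbint hlim
    -- value of the limit integral
    have hval : (∫ p : ℝ × ℝ, (Set.Ioi (0:ℝ)).indicator
          (fun u => f (0,0) * ((Real.exp (-u ^ 2) : ℝ) : ℂ)) p.1 *
          ((Real.exp (-p.2 ^ 2) : ℝ) : ℂ))
        = (f (0,0) * ((Real.sqrt Real.pi / 2 : ℝ) : ℂ)) * ((Real.sqrt Real.pi : ℝ) : ℂ) := by
      rw [show (volume : Measure (ℝ × ℝ)) = (volume : Measure ℝ).prod volume from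
        Measure.volume_eq_prod ℝ ℝ]
      rw [integral_prod_mul (fun u : ℝ => (Set.Ioi (0:ℝ)).indicator
          (fun u => f (0,0) * ((Real.exp (-u ^ 2) : ℝ) : ℂ)) u)
        (fun v : ℝ => ((Real.exp (-v ^ 2) : ℝ) : ℂ))]
      congr 1
      · rw [integral_indicator measurableSet_Ioi, integral_const_mul]
        congr 1
        have h : (∫ a in Set.Ioi (0:ℝ), Real.exp (-a ^ 2)) = Real.sqrt Real.pi / 2 := by
          have := integral_gaussian_Ioi 1
          simp only [neg_mul, one_mul, div_one] at this
          exact this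
        rw [← h]
        exact integral_ofReal (𝕜 := ℂ)
      · have h : (∫ a : ℝ, Real.exp (-a ^ 2)) = Real.sqrt Real.pi := by
          have := integral_gaussian 1
          simp only [neg_mul, one_mul, div_one] at this
          exact this
        rw [← h]
        exact integral_ofReal (𝕜 := ℂ)
    have hprod := ((Complex.continuous_ofReal.tendsto _).comp hsc).mul hJ
    have hfinal := hprod.congr' (hkey.mono fun t ht => ht.symm)
    rw [hval] at hfinal
    have hssC : ((Real.sqrt Real.pi : ℝ) : ℂ) * ((Real.sqrt Real.pi : ℝ) : ℂ)
        = ((Real.pi : ℝ) : ℂ) := by norm_cast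
    convert hfinal using 2
    rw [hπ32]
    push_cast
    linear_combination (-((Real.sqrt Real.pi : ℝ) : ℂ)) * f (0, 0) * hssC
  · -- ν = 0
    intro hν0
    subst hν0
    have hlim : ∀ᵐ p : ℝ × ℝ, Tendsto (fun t : ℝ =>
        f (2 * Real.sqrt (Tt t) * p.2 + (St t / Real.sqrt (Tt t)) * p.1,
          (0:ℝ) * Real.exp (-(p.1 / Real.sqrt (Tt t)))) *
        ((Real.exp (-p.1 ^ 2) : ℝ) : ℂ) * ((Real.exp (-p.2 ^ 2) : ℝ) : ℂ))
        (nhdsWithin 0 (Set.Ioi 0))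
        (nhds (f (0,0) * ((Real.exp (-p.1 ^ 2) : ℝ) : ℂ) * ((Real.exp (-p.2 ^ 2) : ℝ) : ℂ))) := by
      refine Eventually.of_forall fun p => ?_
      have hβ : Tendsto (fun t : ℝ => (0:ℝ) * Real.exp (-(p.1 / Real.sqrt (Tt t))))
          (nhdsWithin 0 (Set.Ioi 0)) (nhds 0) := by
        simpa using (tendsto_const_nhds (α := ℝ) (x := (0:ℝ))
          (f := nhdsWithin (0:ℝ) (Set.Ioi 0))).congr fun t => (zero_mul _).symm
      have harg : Tendsto (fun t : ℝ =>
          ((2 * Real.sqrt (Tt t) * p.2 + (St t / Real.sqrt (Tt t)) * p.1 : ℝ),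
            ((0:ℝ) * Real.exp (-(p.1 / Real.sqrt (Tt t))) : ℝ)))
          (nhdsWithin 0 (Set.Ioi 0)) (nhds ((0:ℝ), (0:ℝ))) :=
        (hy0 p.1 p.2).prodMk_nhds hβ
      exact (((hf.tendsto ((0:ℝ),(0:ℝ))).comp harg).mul tendsto_const_nhds).mul
        tendsto_const_nhds
    have hJ : Tendsto (fun t : ℝ =>
        ∫ p : ℝ × ℝ, f (2 * Real.sqrt (Tt t) * p.2 + (St t / Real.sqrt (Tt t)) * p.1,
            (0:ℝ) * Real.exp (-(p.1 / Real.sqrt (Tt t)))) *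
          ((Real.exp (-p.1 ^ 2) : ℝ) : ℂ) * ((Real.exp (-p.2 ^ 2) : ℝ) : ℂ))
        (nhdsWithin 0 (Set.Ioi 0))
        (nhds (∫ p : ℝ × ℝ, f (0,0) * ((Real.exp (-p.1 ^ 2) : ℝ) : ℂ) *
          ((Real.exp (-p.2 ^ 2) : ℝ) : ℂ))) :=
      tendsto_integral_filter_of_dominated_convergence
        (fun p : ℝ × ℝ => C * (Real.exp (-p.1 ^ 2) * Real.exp (-p.2 ^ 2)))
        (Eventually.of_forall (hmeasG 0))
        (Eventually.of_forall fun t => Eventually.of_forall (hnormG 0 t))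
        hbint hlim
    have hval : (∫ p : ℝ × ℝ, f (0,0) * ((Real.exp (-p.1 ^ 2) : ℝ) : ℂ) *
          ((Real.exp (-p.2 ^ 2) : ℝ) : ℂ))
        = (f (0,0) * ((Real.sqrt Real.pi : ℝ) : ℂ)) * ((Real.sqrt Real.pi : ℝ) : ℂ) := by
      rw [show (volume : Measure (ℝ × ℝ)) = (volume : Measure ℝ).prod volume from
        Measure.volume_eq_prod ℝ ℝ]
      rw [integral_prod_mul (fun u : ℝ => f (0,0) * ((Real.exp (-u ^ 2) : ℝ) : ℂ))
        (fun v : ℝ => ((Real.exp (-v ^ 2) : ℝ) : ℂ))]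
      congr 1
      · rw [integral_const_mul]
        congr 1
        have h : (∫ a : ℝ, Real.exp (-a ^ 2)) = Real.sqrt Real.pi := by
          have := integral_gaussian 1
          simp only [neg_mul, one_mul, div_one] at this
          exact this
        rw [← h]
        exact integral_ofReal (𝕜 := ℂ)
      · have h : (∫ a : ℝ, Real.exp (-a ^ 2)) = Real.sqrt Real.pi := by
          have := integral_gaussian 1
          simp only [neg_mul, one_mul, div_one] at this
          exact this
        rw [← h]
        exact integral_ofReal (𝕜 := ℂ)
    have hprod := ((Complex.continuous_ofReal.tendsto _).comp hsc).mul hJ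
    have hfinal := hprod.congr' (hkey.mono fun t ht => ht.symm)
    rw [hval] at hfinal
    have hssC : ((Real.sqrt Real.pi : ℝ) : ℂ) * ((Real.sqrt Real.pi : ℝ) : ℂ)
        = ((Real.pi : ℝ) : ℂ) := by norm_cast
    convert hfinal using 2
    rw [hπ32]
    push_cast
    linear_combination (-(2:ℂ)) * ((Real.sqrt Real.pi : ℝ) : ℂ) * f (0, 0) * hssC
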